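/- Let f : ℝ → ℝ⁺ be a function such that (i) f(0) = A and f(1) = A·B for some constants A, B > 0; (ii) for all r, s ≥ 0 with ⌊r⌋ = ⌊s⌋ one has f(r)·f(s) = f(r+s)·f(0); and (iii) there exists C ∈ (0,∞) such that for all r, s ≥ 0 with |r − s| ≤ 1 one has f(r)/f(s) ∈ (1/C, C). Then for all r > 0, f(r) = A·B^r. -/

import Mathlib

/-- Functional equation proposition: a positive function with prescribed boundary
values, local logarithmic additivity on intervals with equal floor, and
comparability at unit distance, must be `A * B ^ r`. -/
theorem functional_equation
    (f : ℝ → ℝ) (A B : ℝ) (hA : 0 < A) (hB : 0 < B)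
    (hfpos : ∀ r : ℝ, 0 < f r)
    (hf0 : f 0 = A) (hf1 : f 1 = A * B)
    (hadd : ∀ r s : ℝ, 0 ≤ r → 0 ≤ s → ⌊r⌋ = ⌊s⌋ → f r * f s = f (r + s) * f 0)
    (hcomp : ∃ C : ℝ, 0 < C ∧ ∀ r s : ℝ, 0 ≤ r → 0 ≤ s → |r - s| ≤ 1 →
      f r / f s ∈ Set.Ioo (1 / C) C) :
    ∀ r : ℝ, 0 < r → f r = A * B ^ r := by
  classical
  obtain ⟨C, hCpos, hC⟩ := hcomp
  set L := Real.log B with hLdef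
  set g : ℝ → ℝ := fun x => Real.log (f x) - Real.log A - x * L with hgdef
  -- additivity of g
  have haddg : ∀ r s : ℝ, 0 ≤ r → 0 ≤ s → ⌊r⌋ = ⌊s⌋ → g (r + s) = g r + g s := by
    intro r s hr hs hfl
    have e : Real.log (f r * f s) = Real.log (f (r + s) * f 0) := by
      rw [hadd r s hr hs hfl]
    rw [Real.log_mul (hfpos r).ne' (hfpos s).ne',
      Real.log_mul (hfpos (r + s)).ne' (hfpos 0).ne', hf0] at e
    have hrs : (r + s) * L = r * L + s * L := by ring
    simp only [hgdef]
    rw [hrs]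
    linarith
  have hdouble : ∀ x : ℝ, 0 ≤ x → g (2 * x) = 2 * g x := by
    intro x hx
    have := haddg x x hx hx rfl
    rw [two_mul]
    rw [this]; ring
  have hpow : ∀ n : ℕ, ∀ x : ℝ, 0 ≤ x → g (2 ^ n * x) = 2 ^ n * g x := by
    intro n
    induction n with
    | zero => intro x hx; simp
    | succ n ih =>
      intro x hx
      have e : (2:ℝ) ^ (n + 1) * x = 2 * (2 ^ n * x) := by ring
      rw [e, hdouble _ (by positivity), ih x hx]; ring
  have hg0 : g 0 = 0 := by simp [hgdef, hf0]
  have hg1 : g 1 = 0 := by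
    simp [hgdef, hf1, Real.log_mul hA.ne' hB.ne', hLdef]
  have hC1 : 1 < C := by
    have h1 := hC 0 0 le_rfl le_rfl (by simp)
    rw [div_self (hfpos 0).ne'] at h1
    exact h1.2
  set M : ℝ := Real.log C + 3 * |L| with hMdef
  have hM : 0 ≤ M := by
    have : 0 < Real.log C := Real.log_pos hC1
    have := abs_nonneg L
    simp only [hMdef]; linarith
  have tri : ∀ u v p q : ℝ, |u| ≤ p → |v| ≤ q → |u - v| ≤ p + q := by
    intro u v p q hu hv
    rw [abs_le] at hu hv ⊢
    constructor <;> linarith [hu.1, hu.2, hv.1, hv.2]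
  have key : ∀ a b : ℝ, 0 < a → 0 < b → a / b ∈ Set.Ioo (1 / C) C →
      |Real.log a - Real.log b| ≤ Real.log C := by
    intro a b ha hb hab
    obtain ⟨hlo, hhi⟩ := hab
    have hd : Real.log (a / b) = Real.log a - Real.log b := Real.log_div ha.ne' hb.ne'
    rw [abs_le]
    constructor
    · have h1 : Real.log (1 / C) < Real.log (a / b) :=
        Real.log_lt_log (by positivity) hlo
      rw [one_div, Real.log_inv, hd] at h1
      linarith
    · have h2 : Real.log (a / b) < Real.log C :=
        Real.log_lt_log (div_pos ha hb) hhi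
      rw [hd] at h2
      linarith
  have hbound : ∀ x : ℝ, 0 ≤ x → x ≤ 2 → |g x| ≤ M := by
    intro x hx hx2
    have hxL : |x * L| ≤ 2 * |L| := by
      rw [abs_mul, abs_of_nonneg hx]
      nlinarith [abs_nonneg L]
    by_cases hx1 : x ≤ 1
    · have h1 := key (f x) (f 0) (hfpos x) (hfpos 0)
        (hC x 0 hx le_rfl (by rw [sub_zero, abs_of_nonneg hx]; exact hx1))
      rw [hf0] at h1
      have := tri (Real.log (f x) - Real.log A) (x * L) _ _ h1 hxL
      simp only [hgdef, hMdef]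
      calc |Real.log (f x) - Real.log A - x * L| ≤ Real.log C + 2 * |L| := this
        _ ≤ Real.log C + 3 * |L| := by linarith [abs_nonneg L]
    · push_neg at hx1
      have h1 := key (f x) (f 1) (hfpos x) (hfpos 1)
        (hC x 1 hx zero_le_one (by rw [abs_le]; constructor <;> linarith))
      rw [hf1, Real.log_mul hA.ne' hB.ne'] at h1
      -- |log f x - (log A + L)| ≤ log C
      have h2 : |Real.log (f x) - Real.log A| ≤ Real.log C + |L| := by
        have e : Real.log (f x) - Real.log A =
            (Real.log (f x) - (Real.log A + L)) - (-L) := by ring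
        rw [e]
        exact tri _ _ _ _ h1 (by rw [abs_neg])
      have := tri (Real.log (f x) - Real.log A) (x * L) _ _ h2 hxL
      simp only [hgdef, hMdef]
      calc |Real.log (f x) - Real.log A - x * L| ≤ Real.log C + |L| + 2 * |L| := this
        _ = Real.log C + 3 * |L| := by ring
  have hsmall : ∀ x : ℝ, 0 ≤ x → x < 1 → |g x| ≤ M * x := by
    intro x hx hx1
    rcases eq_or_lt_of_le hx with heq | hxpos
    · rw [← heq]; simp [hg0]
    · have hex : ∃ n : ℕ, 1 ≤ 2 ^ n * x := by
        obtain ⟨n, hn⟩ := pow_unbounded_of_one_lt (1 / x) one_lt_two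
        exact ⟨n, by rw [div_lt_iff₀ hxpos] at hn; nlinarith⟩
      set m := Nat.find hex with hmdef
      have hm1 : 1 ≤ (2:ℝ) ^ m * x := Nat.find_spec hex
      have hm2 : (2:ℝ) ^ m * x < 2 := by
        rcases Nat.eq_zero_or_pos m with hm0 | hm0
        · exfalso; rw [hm0] at hm1; simp at hm1; linarith
        · have hmin := Nat.find_min hex (show m - 1 < m from Nat.sub_lt hm0 one_pos)
          push_neg at hmin
          have e : (2:ℝ) ^ m = 2 * 2 ^ (m - 1) := by
            rw [← pow_succ']
            congr 1
            omega
          rw [e]; nlinarith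
      have hpm := hpow m x hx
      have hb := hbound (2 ^ m * x) (by positivity) hm2.le
      rw [hpm, abs_mul, abs_of_pos (by positivity : (0:ℝ) < (2:ℝ) ^ m)] at hb
      have h2m : (0:ℝ) < 2 ^ m := by positivity
      -- |g x| ≤ M / 2^m ≤ M * x
      rw [← le_div_iff₀' h2m] at hb
      calc |g x| ≤ M / 2 ^ m := hb
        _ ≤ M * x := by
            rw [div_le_iff₀ h2m]
            nlinarith
  have hhalf : ∀ m : ℕ, g (1 / 2 ^ m) = 0 := by
    intro m
    have := hpow m (1 / 2 ^ m) (by positivity)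
    rw [mul_one_div, div_self (by positivity : ((2:ℝ) ^ m) ≠ 0), hg1] at this
    have h2m : ((2:ℝ) ^ m) ≠ 0 := by positivity
    field_simp at this
    rcases mul_eq_zero.mp this.symm with h | h
    · exact absurd h h2m
    · exact h
  have hunit : ∀ r s : ℝ, 0 ≤ r → r < 1 → 0 ≤ s → s < 1 → g (r + s) = g r + g s := by
    intro r s hr hr1 hs hs1
    exact haddg r s hr hs (by
      rw [Int.floor_eq_zero_iff.mpr ⟨hr, hr1⟩, Int.floor_eq_zero_iff.mpr ⟨hs, hs1⟩])
  have hdyad : ∀ m k : ℕ, k ≤ 2 ^ m → g ((k : ℝ) / 2 ^ m) = 0 := by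
    intro m k
    induction k with
    | zero => intro _; simpa using hg0
    | succ k ih =>
      intro hk
      rcases Nat.eq_zero_or_pos m with hm0 | hm0
      · subst hm0
        norm_num at hk
        have hk0' : k = 0 := by omega
        subst hk0'
        simpa using hg1
      · have hk' : k < 2 ^ m := by omega
        have hkr : ((k:ℝ)) < 2 ^ m := by exact_mod_cast hk'
        have h2m1 : (1:ℝ) < 2 ^ m := by
          have : (2:ℝ) ^ 0 < 2 ^ m := by
            apply pow_lt_pow_right₀ one_lt_two (by omega)
          simpa using this
        have e : ((k + 1 : ℕ) : ℝ) / 2 ^ m = (k : ℝ) / 2 ^ m + 1 / 2 ^ m := by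
          push_cast; ring
        rw [e, hunit _ _ (by positivity) ((div_lt_one (by positivity)).mpr hkr)
          (by positivity) ((div_lt_one (by positivity)).mpr h2m1),
          ih hk'.le, hhalf m, add_zero]
  have hzero1 : ∀ t : ℝ, 0 ≤ t → t < 1 → g t = 0 := by
    intro t ht ht1
    have keym : ∀ m : ℕ, |g t| ≤ M / 2 ^ m := by
      intro m
      have h2m : (0:ℝ) < 2 ^ m := by positivity
      set k : ℤ := ⌊(2:ℝ) ^ m * t⌋ with hkdef
      have hk0 : 0 ≤ k := Int.floor_nonneg.mpr (by positivity)
      set d : ℝ := (k : ℝ) / 2 ^ m with hddef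
      have hfl := Int.floor_le ((2:ℝ) ^ m * t)
      have hflu := Int.lt_floor_add_one ((2:ℝ) ^ m * t)
      have hd_le : d ≤ t := by
        rw [hddef, div_le_iff₀ h2m]
        rw [← hkdef] at hfl
        nlinarith
      have hd_lt : t - d < 1 / 2 ^ m := by
        rw [hddef, sub_lt_iff_lt_add]
        rw [← add_div, lt_div_iff₀ h2m]
        rw [← hkdef] at hflu
        nlinarith
      have hd0 : 0 ≤ d := by positivity
      have hd1 : d < 1 := lt_of_le_of_lt hd_le ht1
      have htd0 : 0 ≤ t - d := by linarith
      have h2m1 : (1:ℝ) / 2 ^ m ≤ 1 := by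
        rw [div_le_one h2m]
        calc (1:ℝ) = 1 ^ m := (one_pow m).symm
          _ ≤ 2 ^ m := pow_le_pow_left₀ zero_le_one one_le_two m
      have htd1 : t - d < 1 := lt_of_lt_of_le hd_lt h2m1
      have e : g t = g d + g (t - d) := by
        have := hunit d (t - d) hd0 hd1 htd0 htd1
        rwa [add_sub_cancel] at this
      have hklt : k < 2 ^ m := by
        rw [hkdef, Int.floor_lt]
        push_cast
        nlinarith
      have hgd : g d = 0 := by
        have hknz : (k.toNat : ℤ) ≤ 2 ^ m := by
          rw [Int.toNat_of_nonneg hk0]; exact hklt.le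
        have hkn : k.toNat ≤ 2 ^ m := by exact_mod_cast hknz
        have hd0' := hdyad m k.toNat hkn
        have ec : ((k.toNat : ℕ) : ℝ) = (k : ℝ) := by
          exact_mod_cast congrArg (Int.cast : ℤ → ℝ) (Int.toNat_of_nonneg hk0)
        rw [ec] at hd0'
        exact hd0'
      rw [e, hgd, zero_add]
      calc |g (t - d)| ≤ M * (t - d) := hsmall _ htd0 htd1
        _ ≤ M * (1 / 2 ^ m) := mul_le_mul_of_nonneg_left hd_lt.le hM
        _ = M / 2 ^ m := by ring
    by_contra hne
    have habs : 0 < |g t| := abs_pos.mpr hne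
    obtain ⟨m, hm⟩ := pow_unbounded_of_one_lt (M / |g t|) one_lt_two
    have h2m : (0:ℝ) < 2 ^ m := by positivity
    have h1 : M / 2 ^ m < |g t| := by
      rw [div_lt_iff₀ h2m]
      rw [div_lt_iff₀ habs] at hm
      nlinarith
    linarith [keym m]
  intro r hr
  obtain ⟨n, hn⟩ := pow_unbounded_of_one_lt r one_lt_two
  have h2n : (0:ℝ) < 2 ^ n := by positivity
  have hx0 : 0 ≤ r / 2 ^ n := by positivity
  have hx1 : r / 2 ^ n < 1 := (div_lt_one h2n).mpr hn
  have e : (2:ℝ) ^ n * (r / 2 ^ n) = r := by field_simp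
  have hgr : g r = 0 := by
    have hp := hpow n (r / 2 ^ n) hx0
    rw [e, hzero1 _ hx0 hx1, mul_zero] at hp
    exact hp
  have hlogr : Real.log (f r) = Real.log A + r * L := by
    simp only [hgdef] at hgr
    linarith
  have hfr : f r = Real.exp (Real.log A + r * L) := by
    rw [← Real.exp_log (hfpos r), hlogr]
  rw [hfr, Real.exp_add, Real.exp_log hA, Real.rpow_def_of_pos hB, mul_comm r L, hLdef]
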